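/- Convergence of the renormalized eigenvalue sequence (final claim of Section 6): Let n ≥ 2 be an integer, M ∈ ℕ, and let (λ_m)_{m≥0} be a sequence of real numbers such that λ_{m−1} = (n+2)·λ_m − λ_m² for all m ≥ 1 (i.e. each λ_m satisfies the quadratic λ_m² − (n+2)λ_m + λ_{m−1} = 0), and such that 0 ≤ λ_m ≤ (n+2)/2 for all m ≥ M (equivalently, the branch λ_m = ((n+2) − √((n+2)² − 4λ_{m−1}))/2 with the minus sign is chosen for all m ≥ M). Then the sequence ( (n+2)^m · λ_m )_{m≥0} converges to a finite real limit. -/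

import Mathlib

open Finset

noncomputable section

/-- Ambient Euclidean space `ℝ^{n-1}`. -/
abbrev Amb (n : ℕ) := EuclideanSpace ℝ (Fin (n - 1))

/-- The contraction `f_i(x) = (x + x_i)/2`. -/
def fmap {n : ℕ} (pts : Fin n → Amb n) (i : Fin n) (x : Amb n) : Amb n :=
  (2 : ℝ)⁻¹ • (x + pts i)

/-- Composition of contractions along a list (first entry applied last... actually first). -/
def fList {n : ℕ} (pts : Fin n → Amb n) : List (Fin n) → Amb n → Amb n
  | [] => id
  | i :: t => fmap pts i ∘ fList pts t

/-- The `m`-contraction `f_w = f_{w_0} ∘ ⋯ ∘ f_{w_{m-1}}`. -/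
def fWord {n m : ℕ} (pts : Fin n → Amb n) (w : Fin m → Fin n) : Amb n → Amb n :=
  fList pts (List.ofFn w)

/-- The vertex set `V_m = ⋃_w f_w(V_0)`, where `V_0 = {x_0, …, x_{n-1}}`. -/
def V {n : ℕ} (pts : Fin n → Amb n) (m : ℕ) : Set (Amb n) :=
  ⋃ w : Fin m → Fin n, fWord pts w '' Set.range pts

/-- Adjacency in the graph `Γ_m`. -/
def Adj {n : ℕ} (pts : Fin n → Amb n) (m : ℕ) (x y : Amb n) : Prop :=
  x ≠ y ∧ ∃ w : Fin m → Fin n,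
    x ∈ fWord pts w '' Set.range pts ∧ y ∈ fWord pts w '' Set.range pts

/-- The graph Laplacian `Δ_m u (x) = ∑_{y ~ x} (u(x) - u(y))`. -/
def lap {n : ℕ} (pts : Fin n → Amb n) (m : ℕ) (u : Amb n → ℝ) (x : Amb n) : ℝ :=
  ∑ᶠ y ∈ {y | Adj pts m x y}, (u x - u y)

/-- `u` is an eigenfunction of `Δ_m` with eigenvalue `lam`:
`Δ_m u (x) = lam * u x` for all `x ∈ V_m \ V_0`. -/
def IsEigen {n : ℕ} (pts : Fin n → Amb n) (m : ℕ) (u : Amb n → ℝ) (lam : ℝ) : Prop :=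
  ∀ x ∈ V pts m \ V pts 0, lap pts m u x = lam * u x

/-- The point `x_{r,s} = f_a((x_r + x_s)/2)` for a word `a` of length `m-1`. -/
def xpt {n m : ℕ} (pts : Fin n → Amb n) (a : Fin m → Fin n) (r s : Fin n) : Amb n :=
  fWord pts a ((2 : ℝ)⁻¹ • (pts r + pts s))

/-- The graph energy `E_m(u) = ∑_{x ~ y} (u(x) - u(y))²`, summed over unordered
adjacent pairs (each ordered pair counted once, then halved). -/
def energy {n : ℕ} (pts : Fin n → Amb n) (m : ℕ) (u : Amb n → ℝ) : ℝ :=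
  (2 : ℝ)⁻¹ * ∑ᶠ p ∈ {p : Amb n × Amb n | Adj pts m p.1 p.2}, (u p.1 - u p.2) ^ 2


set_option maxHeartbeats 1000000 in
/-- Convergence of the renormalized eigenvalue sequence. -/
theorem renormalized_eigenvalue_limit
    (n : ℕ) (hn : 2 ≤ n) (M : ℕ) (lam : ℕ → ℝ)
    (hrec : ∀ m : ℕ, 1 ≤ m → lam m ^ 2 - ((n : ℝ) + 2) * lam m + lam (m - 1) = 0)
    (hbranch : ∀ m : ℕ, M ≤ m → 0 ≤ lam m ∧ lam m ≤ ((n : ℝ) + 2) / 2) :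
    ∃ L : ℝ, Filter.Tendsto (fun m : ℕ => ((n : ℝ) + 2) ^ m * lam m)
      Filter.atTop (nhds L) := by
  set q : ℝ := (n : ℝ) + 2 with hq_def
  have hn2 : (2 : ℝ) ≤ (n : ℝ) := by exact_mod_cast hn
  have hq4 : (4 : ℝ) ≤ q := by rw [hq_def]; linarith
  have hq0 : (0 : ℝ) < q := by linarith
  set a : ℕ → ℝ := fun m => q ^ m * lam m with ha_def
  have hrec' : ∀ m : ℕ, lam m = q * lam (m + 1) - lam (m + 1) ^ 2 := by
    intro m
    have h := hrec (m + 1) (by omega)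
    simp only [Nat.add_sub_cancel] at h
    linarith
  have key : ∀ m : ℕ, a (m + 1) = a m + q ^ m * lam (m + 1) ^ 2 := by
    intro m
    have h := hrec' m
    have hql : q * lam (m + 1) = lam m + lam (m + 1) ^ 2 := by linarith
    calc a (m + 1) = q ^ m * (q * lam (m + 1)) := by rw [ha_def]; ring
      _ = q ^ m * (lam m + lam (m + 1) ^ 2) := by rw [hql]
      _ = a m + q ^ m * lam (m + 1) ^ 2 := by rw [ha_def]; ring
  have amono : Monotone a := by
    apply monotone_nat_of_le_succ
    intro m
    have h := key m
    have h2 : 0 ≤ q ^ m * lam (m + 1) ^ 2 :=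
      mul_nonneg (pow_nonneg hq0.le m) (sq_nonneg _)
    linarith
  -- decay by factor 1/2 beyond M
  have decay2 : ∀ m : ℕ, M ≤ m → lam (m + 1) ≤ lam m / 2 := by
    intro m hm
    obtain ⟨hp, hb⟩ := hbranch (m + 1) (by omega)
    have h := hrec' m
    nlinarith [mul_nonneg hp (show (0 : ℝ) ≤ q - 2 - lam (m + 1) by linarith)]
  have geo : ∀ k : ℕ, lam (M + k) ≤ lam M / 2 ^ k := by
    intro k
    induction k with
    | zero => simp
    | succ k ih =>
      have h := decay2 (M + k) (by omega)
      have h2 : (0:ℝ) < 2 ^ k := by positivity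
      calc lam (M + (k + 1)) = lam ((M + k) + 1) := by ring_nf
        _ ≤ lam (M + k) / 2 := h
        _ ≤ (lam M / 2 ^ k) / 2 := by linarith
        _ = lam M / 2 ^ (k + 1) := by rw [pow_succ]; ring
  set m0 : ℕ := M + n with hm0_def
  have hle_pow : ((n : ℝ) + 2) ≤ 2 ^ (n + 1) := by
    have h1 : n + 2 ≤ 2 ^ (n + 1) := by
      have h2 : n < 2 ^ n := Nat.lt_two_pow_self
      calc n + 2 ≤ n + n := by omega
        _ ≤ 2 ^ n + 2 ^ n := by omega
        _ = 2 ^ (n + 1) := by rw [pow_succ]; ring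
    calc ((n : ℝ) + 2) = ((n + 2 : ℕ) : ℝ) := by push_cast; ring
      _ ≤ ((2 ^ (n + 1) : ℕ) : ℝ) := by exact_mod_cast h1
      _ = 2 ^ (n + 1) := by push_cast; ring
  have hm0M : M ≤ m0 := by omega
  have small : lam m0 ≤ 1 := by
    obtain ⟨hp, hb⟩ := hbranch M le_rfl
    have h := geo n
    have h2 : (0:ℝ) < 2 ^ n := by positivity
    have h3 : lam M / 2 ^ n ≤ 1 := by
      rw [div_le_one h2]
      have : q ≤ 2 ^ (n + 1) := hle_pow
      rw [pow_succ] at this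
      linarith
    linarith
  have le_one : ∀ k : ℕ, lam (m0 + k) ≤ 1 := by
    intro k
    induction k with
    | zero => simpa using small
    | succ k ih =>
      have h := decay2 (m0 + k) (by omega)
      have hp := (hbranch (m0 + k) (by omega)).1
      calc lam (m0 + (k + 1)) = lam ((m0 + k) + 1) := by ring_nf
        _ ≤ lam (m0 + k) / 2 := h
        _ ≤ 1 := by linarith
  set c : ℝ := (n : ℝ) + 1 with hc_def
  have hc0 : (0 : ℝ) < c := by rw [hc_def]; linarith
  have hc1 : (1 : ℝ) ≤ c := by rw [hc_def]; linarith
  have hcinv : (0 : ℝ) ≤ c⁻¹ := by positivity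
  have hcinv1 : c⁻¹ ≤ 1 := by
    rw [inv_le_one_iff₀]; right; exact hc1
  have decayB : ∀ k : ℕ, lam (m0 + k + 1) ≤ lam (m0 + k) / c := by
    intro k
    have h := hrec' (m0 + k)
    have h1 : lam (m0 + k + 1) ≤ 1 := by
      have := le_one (k + 1); rw [show m0 + (k + 1) = m0 + k + 1 by ring] at this
      exact this
    have hp : 0 ≤ lam (m0 + k + 1) := (hbranch (m0 + k + 1) (by omega)).1
    rw [le_div_iff₀ hc0]
    nlinarith [mul_nonneg hp (show (0:ℝ) ≤ 1 - lam (m0 + k + 1) by linarith)]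
  have geoB : ∀ k : ℕ, lam (m0 + k) ≤ (c⁻¹) ^ k := by
    intro k
    induction k with
    | zero => simpa using small
    | succ k ih =>
      have h := decayB k
      have hck : (0:ℝ) ≤ (c⁻¹) ^ k := by positivity
      calc lam (m0 + (k + 1)) = lam (m0 + k + 1) := by ring_nf
        _ ≤ lam (m0 + k) / c := h
        _ = lam (m0 + k) * c⁻¹ := by rw [div_eq_mul_inv]
        _ ≤ (c⁻¹) ^ k * c⁻¹ := by
            apply mul_le_mul_of_nonneg_right ih hcinv
        _ = (c⁻¹) ^ (k + 1) := by rw [pow_succ]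
  set r : ℝ := q * (c⁻¹) ^ 2 with hr_def
  have hr0 : 0 ≤ r := by positivity
  have hr1 : r < 1 := by
    rw [hr_def]
    have hc2 : q < c ^ 2 := by
      rw [hq_def, hc_def]; nlinarith
    have : q * (c⁻¹) ^ 2 = q / c ^ 2 := by
      rw [div_eq_mul_inv, inv_pow]
    rw [this, div_lt_one (by positivity)]
    exact hc2
  have h1r : (0 : ℝ) < 1 - r := by linarith
  set K : ℝ := q ^ m0 with hK_def
  have hK0 : 0 < K := by positivity
  have claim : ∀ t : ℕ, a (m0 + t) ≤ a m0 + K / (1 - r) - K * r ^ t / (1 - r) := by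
    intro t
    induction t with
    | zero => simp
    | succ t ih =>
      have hk := key (m0 + t)
      have hlb := geoB (t + 1)
      have hp : 0 ≤ lam (m0 + (t + 1)) := (hbranch _ (by omega)).1
      have hsq : lam (m0 + t + 1) ^ 2 ≤ ((c⁻¹) ^ (t + 1)) ^ 2 := by
        have hlb' : lam (m0 + t + 1) ≤ (c⁻¹) ^ (t + 1) := by
          rw [show m0 + t + 1 = m0 + (t + 1) by ring]; exact hlb
        have hp' : 0 ≤ lam (m0 + t + 1) := by
          rw [show m0 + t + 1 = m0 + (t + 1) by ring]; exact hp
        exact pow_le_pow_left₀ hp' hlb' 2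
      have hinc : q ^ (m0 + t) * lam (m0 + t + 1) ^ 2 ≤ K * r ^ t := by
        have h1 : q ^ (m0 + t) * lam (m0 + t + 1) ^ 2
            ≤ q ^ (m0 + t) * ((c⁻¹) ^ (t + 1)) ^ 2 :=
          mul_le_mul_of_nonneg_left hsq (by positivity)
        have h2 : q ^ (m0 + t) * ((c⁻¹) ^ (t + 1)) ^ 2
            = (K * r ^ t) * (c⁻¹) ^ 2 := by
          rw [hK_def, hr_def]
          rw [pow_add]
          rw [mul_pow]
          ring
        have h3 : (K * r ^ t) * (c⁻¹) ^ 2 ≤ K * r ^ t := by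
          have hKr : 0 ≤ K * r ^ t := by positivity
          have hci2 : (c⁻¹) ^ 2 ≤ 1 := pow_le_one₀ hcinv hcinv1
          exact mul_le_of_le_one_right hKr hci2
        linarith
      have e : K / (1 - r) - K * r ^ (t + 1) / (1 - r)
          = (K / (1 - r) - K * r ^ t / (1 - r)) + K * r ^ t := by
        field_simp
        ring
      have ha1 : a (m0 + (t + 1)) = a (m0 + t) + q ^ (m0 + t) * lam (m0 + t + 1) ^ 2 := by
        rw [show m0 + (t + 1) = (m0 + t) + 1 by ring]
        exact hk
      linarith
  have bound : ∀ m : ℕ, a m ≤ a m0 + K / (1 - r) := by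
    intro m
    rcases le_or_gt m m0 with h | h
    · have := amono h
      have : K / (1 - r) ≥ 0 := by positivity
      linarith [amono (show m ≤ m0 from by omega)]
    · have hm : m = m0 + (m - m0) := by omega
      have := claim (m - m0)
      rw [← hm] at this
      have hpos : 0 ≤ K * r ^ (m - m0) / (1 - r) := by positivity
      linarith
  rcases tendsto_of_monotone amono with h | h
  · exfalso
    obtain ⟨m, hm⟩ := (h.eventually_gt_atTop (a m0 + K / (1 - r))).exists
    linarith [bound m]
  · obtain ⟨L, hL⟩ := h
    exact ⟨L, hL⟩
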